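/- Let G be a finite p-group with a unique A₂-subgroup K and |G'| = p. Then K is not contained in the Frattini subgroup Φ(G). -/

import Mathlib

/-- `G` is a minimal non-abelian group: non-abelian, but all proper subgroups abelian. -/
def IsMinimalNonabelian (G : Type*) [Group G] : Prop :=
  (¬ ∀ a b : G, a * b = b * a) ∧
    ∀ H : Subgroup G, H ≠ ⊤ → ∀ a ∈ H, ∀ b ∈ H, a * b = b * a

/-- `G` is an `𝒜_t`-group: it has a non-abelian subgroup of index `p ^ (t-1)`,
but all subgroups of index `p ^ t` are abelian. -/
def IsAGroup (p t : ℕ) (G : Type*) [Group G] : Prop :=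
  (∃ H : Subgroup G, H.index = p ^ (t - 1) ∧ ¬ ∀ a ∈ H, ∀ b ∈ H, a * b = b * a) ∧
    ∀ H : Subgroup G, H.index = p ^ t → ∀ a ∈ H, ∀ b ∈ H, a * b = b * a

open scoped commutatorElement

/-- In a finite `p`-group with `|G'| = p`, the commutator subgroup is central. -/
lemma commutator_le_center_of_card_eq {p : ℕ} (hp : p.Prime) {G : Type*} [Group G] [Finite G]
    (hG : IsPGroup p G) (hG' : Nat.card (commutator G) = p) :
    commutator G ≤ Subgroup.center G := by
  haveI := Fact.mk hp
  set N : Subgroup G := commutator G with hN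
  have hGc : IsPGroup p (ConjAct G) := hG
  have hmod := hGc.card_modEq_card_fixedPoints (↥N)
  rw [hG'] at hmod
  set F : Set ↥N := MulAction.fixedPoints (ConjAct G) ↥N with hF
  have h1F : (1 : ↥N) ∈ F := by
    intro g
    exact smul_one g
  have hFle : Nat.card F ≤ p := by
    rw [← hG']
    exact Nat.card_le_card_of_injective Subtype.val Subtype.val_injective
  have hFpos : 0 < Nat.card F := Nat.card_pos_iff.mpr ⟨⟨1, h1F⟩, Set.toFinite F⟩
  have hdvd : p ∣ Nat.card F := (Nat.modEq_zero_iff_dvd.mp (hmod.symm.trans (Nat.modEq_zero_iff_dvd.mpr dvd_rfl)))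
  have hFeq : Nat.card F = p := le_antisymm hFle (Nat.le_of_dvd hFpos hdvd)
  have hsurj : Function.Surjective (Subtype.val : F → ↥N) := by
    have hbij := (Nat.bijective_iff_injective_and_card (Subtype.val : F → ↥N)).mpr
      ⟨Subtype.val_injective, by rw [hFeq, hG']⟩
    exact hbij.2
  intro x hx
  rw [Subgroup.mem_center_iff]
  intro g
  obtain ⟨⟨y, hy⟩, hyx⟩ := hsurj ⟨x, hx⟩
  have hfix : ∀ gc : ConjAct G, gc • y = y := hy
  have := congrArg Subtype.val (hfix (ConjAct.toConjAct g))
  rw [ConjAct.Subgroup.val_conj_smul, ConjAct.smul_def, ConjAct.ofConjAct_toConjAct] at this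
  have hyx' : (y : G) = x := congrArg Subtype.val hyx
  rw [hyx'] at this
  -- this : g * x * g⁻¹ = x
  calc g * x = (g * x * g⁻¹) * g := by group
    _ = x * g := by rw [this]

/-- In a finite `p`-group with `|G'| = p`, every `p`-th power is central. -/
lemma pow_p_mem_center {p : ℕ} (hp : p.Prime) {G : Type*} [Group G] [Finite G]
    (hG : IsPGroup p G) (hG' : Nat.card (commutator G) = p) (x : G) :
    x ^ p ∈ Subgroup.center G := by
  have hcc := commutator_le_center_of_card_eq hp hG hG'
  rw [Subgroup.mem_center_iff]
  intro g
  have hcmem : ⁅g, x⁆ ∈ commutator G := by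
    rw [commutator_def]
    exact Subgroup.commutator_mem_commutator (Subgroup.mem_top g) (Subgroup.mem_top x)
  set c : G := ⁅g, x⁆ with hc
  have hcZ : c ∈ Subgroup.center G := hcc hcmem
  have hcp : c ^ p = 1 := by
    have := pow_card_eq_one' (x := (⟨c, hcmem⟩ : ↥(commutator G)))
    rw [hG'] at this
    have := congrArg Subtype.val this
    simpa using this
  have hcomm : Commute c x := by
    have := Subgroup.mem_center_iff.mp hcZ x
    exact this.symm
  have hconj : g * x * g⁻¹ = c * x := by
    rw [hc, commutatorElement_def]
    group
  have : g * x ^ p * g⁻¹ = (c * x) ^ p := by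
    rw [← hconj, conj_pow]
  rw [hcomm.mul_pow, hcp, one_mul] at this
  calc g * x ^ p = (g * x ^ p * g⁻¹) * g := by group
    _ = x ^ p * g := by rw [this]

theorem stmt12 {p : ℕ} (hp : p.Prime) {G : Type*} [Group G] [Finite G]
    (hG : IsPGroup p G) (hG' : Nat.card (commutator G) = p)
    {K : Subgroup G} (hK : IsAGroup p 2 ↥K)
    (huniq : ∀ K' : Subgroup G, IsAGroup p 2 ↥K' → K' = K) :
    ¬ K ≤ frattini G := by
  intro hle
  have hcc := commutator_le_center_of_card_eq hp hG hG'
  have hpow := pow_p_mem_center hp hG hG'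
  -- extract two non-commuting elements of K
  obtain ⟨⟨H, -, hH⟩, -⟩ := hK
  push_neg at hH
  obtain ⟨a, -, b, -, hab⟩ := hH
  set A : G := (a : G) with hA
  set B : G := (b : G) with hB
  have hAB : A * B ≠ B * A := fun h => hab (Subtype.ext h)
  have hAfr : A ∈ frattini G := hle a.2
  have hAZ : A ∉ Subgroup.center G := by
    intro h
    exact hAB (Subgroup.mem_center_iff.mp h B).symm
  -- find a subgroup maximal among those containing the center and avoiding A
  haveI : Finite (Subgroup G) :=
    Finite.of_injective (fun H : Subgroup G => (H : Set G)) SetLike.coe_injective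
  set S : Set (Subgroup G) := {M | Subgroup.center G ≤ M ∧ A ∉ M} with hS
  obtain ⟨M, hMS, hMmax⟩ := (wellFounded_gt (α := Subgroup G)).has_min S
    ⟨Subgroup.center G, le_refl _, hAZ⟩
  obtain ⟨hZM, hAM⟩ := hMS
  haveI hMnorm : M.Normal := by
    constructor
    intro n hn g
    have hcm : ⁅g, n⁆ ∈ M := hZM (hcc (by
      rw [commutator_def]
      exact Subgroup.commutator_mem_commutator (Subgroup.mem_top g) (Subgroup.mem_top n)))
    have h2 : g * n * g⁻¹ = ⁅g, n⁆ * n := by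
      rw [commutatorElement_def]; group
    rw [h2]
    exact M.mul_mem hcm hn
  -- key claim: any element outside M pushes A into M ⊔ ⟨g⟩
  have star : ∀ g : G, g ∉ M → A ∈ M ⊔ Subgroup.zpowers g := by
    intro g hg
    by_contra hA'
    refine hMmax (M ⊔ Subgroup.zpowers g) ⟨le_trans hZM le_sup_left, hA'⟩ ?_
    exact lt_of_le_not_ge le_sup_left
      (fun h => hg (h (Subgroup.mem_sup_right (Subgroup.mem_zpowers g))))
  -- second claim: any element outside M lies in M ⊔ ⟨A⟩
  have star2 : ∀ g : G, g ∉ M → g ∈ M ⊔ Subgroup.zpowers A := by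
    intro g hg
    have hA' := star g hg
    rw [← SetLike.mem_coe, Subgroup.normal_mul] at hA'
    obtain ⟨m, hm, y, hy, hAeq⟩ := hA'
    obtain ⟨k, rfl⟩ := Subgroup.mem_zpowers_iff.mp hy
    have hgk : g ^ k ∈ M ⊔ Subgroup.zpowers A := by
      have hgkeq : g ^ k = m⁻¹ * A := by rw [← hAeq]; group
      rw [hgkeq]
      exact Subgroup.mul_mem _ (Subgroup.mem_sup_left (M.inv_mem hm))
        (Subgroup.mem_sup_right (Subgroup.mem_zpowers A))
    have hgp : g ^ (p : ℤ) ∈ M := by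
      rw [zpow_natCast]
      exact hZM (hpow g)
    have hpk : ¬ (p : ℤ) ∣ k := by
      rintro ⟨t, rfl⟩
      apply hAM
      rw [← hAeq]
      refine M.mul_mem hm ?_
      rw [zpow_mul]
      exact Subgroup.zpow_mem M hgp t
    have hcop : IsCoprime (p : ℤ) k :=
      ((Nat.prime_iff_prime_int.mp hp).coprime_iff_not_dvd).mpr hpk
    obtain ⟨u, v, huv⟩ := hcop
    have hgdec : g = (g ^ (p : ℤ)) ^ u * (g ^ k) ^ v := by
      rw [← zpow_mul, ← zpow_mul, ← zpow_add]
      rw [show (p : ℤ) * u + k * v = u * (p : ℤ) + v * k by ring, huv, zpow_one]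
    rw [hgdec]
    exact Subgroup.mul_mem _ (Subgroup.zpow_mem _ (Subgroup.mem_sup_left hgp) u)
      (Subgroup.zpow_mem _ hgk v)
  -- M is a maximal subgroup of G
  have hcoatom : IsCoatom M := by
    constructor
    · intro h
      rw [h] at hAM
      exact hAM (Subgroup.mem_top A)
    · intro N hMN
      obtain ⟨g, hgN, hgM⟩ := SetLike.exists_of_lt hMN
      have hAN : A ∈ N := by
        have : M ⊔ Subgroup.zpowers g ≤ N :=
          sup_le hMN.le (Subgroup.zpowers_le.mpr hgN)
        exact this (star g hgM)
      rw [eq_top_iff]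
      intro h _
      by_cases hh : h ∈ M
      · exact hMN.le hh
      · have : M ⊔ Subgroup.zpowers A ≤ N :=
          sup_le hMN.le (Subgroup.zpowers_le.mpr hAN)
        exact this (star2 h hh)
  exact hAM (frattini_le_coatom hcoatom hAfr)
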